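/- Let r be the Rudin–Shapiro sequence and Q_n(x) the convergent denominators for r. Then for all j ≥ 2: (1) Q_{2^{2j}−2}(x) ≡ 1 + 2x + 2(1 + x)·S_{2j-2}(x) (mod 4); (2) Q_{2^{2j+1}−2}(x) ≡ 1 + 2(1 + x)·S_{2j-1}(x) (mod 4); (3) Q_{2^{2j}−1}(x) ≡ 1 + 2x² + 2x⁵ + 2x·S^o_{j-2}(x) + (3 + 2x³)·S_{2j-2}(x) + 2(1 + x)·T_{2j-2}(x) + x^{2^{2j-1}} (mod 4); (4) Q_{2^{2j+1}−1}(x) ≡ 1 + 2x² + 2x⁵ + 2x·S^e_{j-1}(x) + (3 + 2x³)·S_{2j-1}(x) + 2(1 + x)·T_{2j-1}(x) + x^{2^{2j}} (mod 4). -/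
import Mathlib


open Polynomial

/-- The elementary matrix `[[0, c_i x],[1,1]]` used to build the convergents of a
Stieltjes continued fraction. -/
noncomputable def step (c : ℕ → ℤ) (i : ℕ) : Matrix (Fin 2) (Fin 2) (Polynomial ℤ) :=
  !![0, Polynomial.C (c i) * Polynomial.X; 1, 1]

/-- `S_n(x) = Σ_{i=0}^{n} x^{2^i}`. -/
noncomputable def Spoly (n : ℕ) : Polynomial ℤ :=
  ∑ i ∈ Finset.range (n + 1), Polynomial.X ^ (2 ^ i)

/-- `S^e_n(x) = Σ_{i=0}^{n} x^{2^{2i}}`. -/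
noncomputable def Sepoly (n : ℕ) : Polynomial ℤ :=
  ∑ i ∈ Finset.range (n + 1), Polynomial.X ^ (2 ^ (2 * i))

/-- `S^o_n(x) = Σ_{i=0}^{n} x^{2^{2i+1}}`. -/
noncomputable def Sopoly (n : ℕ) : Polynomial ℤ :=
  ∑ i ∈ Finset.range (n + 1), Polynomial.X ^ (2 ^ (2 * i + 1))

/-- `T_n(x) = Σ_{i=3}^{n} Σ_{k=2}^{i-1} x^{2^i + 2^k}` (so `T_2 = 0`). -/
noncomputable def Tpoly (n : ℕ) : Polynomial ℤ :=
  ∑ i ∈ Finset.Icc 3 n, ∑ k ∈ Finset.Icc 2 (i - 1), Polynomial.X ^ (2 ^ i + 2 ^ k)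



noncomputable section

abbrev R4 := Polynomial (ZMod 4)

lemma four_eq_zero : (4 : R4) = 0 := by
  have : (4 : R4) = Polynomial.C (4 : ZMod 4) := by rw [map_ofNat]
  rw [this, show (4 : ZMod 4) = 0 by decide, map_zero]

def sR (n : ℕ) : R4 := ∑ i ∈ Finset.range (n + 1), X ^ (2 ^ i)
def seR (n : ℕ) : R4 := ∑ i ∈ Finset.range (n + 1), X ^ (2 ^ (2 * i))
def soR (n : ℕ) : R4 := ∑ i ∈ Finset.range (n + 1), X ^ (2 ^ (2 * i + 1))
def tR (n : ℕ) : R4 := ∑ i ∈ Finset.Icc 3 n, ∑ k ∈ Finset.Icc 2 (i - 1), X ^ (2 ^ i + 2 ^ k)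

lemma s_succ (n : ℕ) : sR (n + 1) = sR n + X ^ (2 ^ (n + 1)) := by
  rw [sR, sR, Finset.sum_range_succ]

lemma s_zero : sR 0 = X := by simp [sR]

lemma s_two : sR 2 = X + X ^ 2 + X ^ 4 := by
  rw [show (2:ℕ) = 1 + 1 from rfl, s_succ, s_succ, s_zero]; norm_num

lemma se_succ (n : ℕ) : seR (n + 1) = seR n + X ^ (2 ^ (2 * n + 2)) := by
  rw [seR, seR, Finset.sum_range_succ, show 2 * (n+1) = 2*n+2 by ring]

lemma se_zero : seR 0 = X := by simp [seR]

lemma so_succ (n : ℕ) : soR (n + 1) = soR n + X ^ (2 ^ (2 * n + 3)) := by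
  rw [soR, soR, Finset.sum_range_succ, show 2 * (n+1) + 1 = 2*n+3 by ring]

lemma so_zero : soR 0 = X ^ 2 := by simp [soR]

lemma t_small (n : ℕ) (h : n ≤ 2) : tR n = 0 := by
  rw [tR, Finset.Icc_eq_empty (by omega), Finset.sum_empty]

lemma sIcc (n : ℕ) (h : 2 ≤ n) : (∑ k ∈ Finset.Icc 2 n, (X:R4) ^ (2 ^ k)) = sR n - X - X ^ 2 := by
  induction n with
  | zero => omega
  | succ m ih =>
    rcases Nat.lt_or_ge m 2 with hm | hm
    · interval_cases m
      · omega
      · rw [show (1:ℕ)+1 = 2 from rfl, Finset.Icc_self, Finset.sum_singleton, s_two]; ring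
    · rw [Finset.sum_Icc_succ_top (by omega), ih hm, s_succ]; ring

lemma t_succ (n : ℕ) (h : 2 ≤ n) :
    tR (n + 1) = tR n + X ^ (2 ^ (n + 1)) * (sR n - X - X ^ 2) := by
  rw [tR, tR, Finset.sum_Icc_succ_top (by omega)]
  congr 1
  rw [show n + 1 - 1 = n from rfl]
  rw [← sIcc n h, Finset.mul_sum]
  apply Finset.sum_congr rfl
  intro k _
  rw [pow_add]

lemma interleave1 (n : ℕ) : sR (2 * n + 1) = seR n + soR n := by
  induction n with
  | zero => rw [show 2*0+1 = 0+1 by ring, s_succ, s_zero, se_zero, so_zero]; norm_num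
  | succ m ih =>
    rw [show 2*(m+1)+1 = (2*m+2)+1 by ring, s_succ, show (2*m+2) = (2*m+1)+1 by ring, s_succ,
      ih, se_succ, so_succ, show (2*m+1)+1 = 2*m+2 by ring, show (2*m+2)+1 = 2*m+3 by ring]
    ring

lemma interleave2 (n : ℕ) : sR (2 * n + 2) = seR (n + 1) + soR n := by
  rw [show 2*n+2 = (2*n+1)+1 by ring, s_succ, interleave1, se_succ]
  ring

lemma sq_s (n : ℕ) (h : 2 ≤ n) :
    sR n ^ 2 = sR (n + 1) + 3 * X + 2 * tR n + 2 * (X + X ^ 2) * sR n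
      + 2 * (X ^ 2 + X ^ 3 + X ^ 4) := by
  induction n with
  | zero => omega
  | succ m ih =>
    rcases Nat.lt_or_ge m 2 with hm | hm
    · interval_cases m
      · omega
      · rw [show (1:ℕ)+1 = 2 from rfl, s_two, t_small 2 (by norm_num),
          show (2:ℕ)+1 = 2+1 from rfl, s_succ, s_two]
        linear_combination (-(X + X^2 + X^3 + X^4) : R4) * four_eq_zero
    · rw [t_succ m hm, s_succ m, s_succ (m+1),
        show (2:ℕ)^(m+2) = 2^(m+1) * 2^1 by rw [← pow_add], pow_mul]
      linear_combination ih hm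

def phi : R4 →+* R4 := (Polynomial.aeval (-X : R4)).toRingHom

lemma phi_X : phi X = -X := by simp [phi]

lemma phi_C (c : ZMod 4) : phi (C c) = C c := by simp [phi]

lemma neg_pow_two_pow (n : ℕ) : (-X : R4) ^ (2 ^ (n + 1)) = X ^ (2 ^ (n + 1)) :=
  Even.neg_pow ⟨2 ^ n, by ring⟩ X

lemma phi_s (n : ℕ) : phi (sR n) = sR n + 2 * X := by
  induction n with
  | zero =>
    rw [s_zero, phi_X]
    linear_combination (-X : R4) * four_eq_zero
  | succ m ih =>
    rw [s_succ, map_add, map_pow, phi_X, neg_pow_two_pow, ih]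
    ring

lemma phi_se (n : ℕ) : phi (seR n) = seR n + 2 * X := by
  induction n with
  | zero =>
    rw [se_zero, phi_X]
    linear_combination (-X : R4) * four_eq_zero
  | succ m ih =>
    rw [se_succ, map_add, map_pow, phi_X, show 2*m+2 = (2*m+1)+1 by ring, neg_pow_two_pow, ih]
    ring

lemma phi_so (n : ℕ) : phi (soR n) = soR n := by
  induction n with
  | zero =>
    rw [so_zero, map_pow, phi_X]
    ring
  | succ m ih =>
    rw [so_succ, map_add, map_pow, phi_X, show 2*m+3 = (2*m+2)+1 by ring, neg_pow_two_pow, ih]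

lemma phi_t (n : ℕ) : phi (tR n) = tR n := by
  induction n with
  | zero => rw [t_small 0 (by norm_num), map_zero]
  | succ m ih =>
    rcases Nat.lt_or_ge m 2 with hm | hm
    · rw [t_small (m+1) (by omega), map_zero]
    · rw [t_succ m hm, map_add, map_mul, map_pow, phi_X, neg_pow_two_pow, map_sub, map_sub,
        phi_s, phi_X, map_pow, phi_X, ih]
      linear_combination (X^(2^(m+1)) * X : R4) * four_eq_zero

set_option maxHeartbeats 4000000


lemma m2ext {α : Type*} {a b c d e f g h : α} (h1 : a = e) (h2 : b = f) (h3 : c = g)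
    (h4 : d = h) : !![a, b; c, d] = !![e, f; g, h] := by rw [h1, h2, h3, h4]

lemma mapM2 {α β : Type*} [NonAssocSemiring α] [NonAssocSemiring β] (f : α →+* β)
    (a b c d : α) : f.mapMatrix !![a, b; c, d] = !![f a, f b; f c, f d] := by
  ext i j
  fin_cases i <;> fin_cases j <;> simp [RingHom.mapMatrix_apply]

lemma sOdd (k : ℕ) : sR (2*k+3) = sR (2*k+2) + X ^ 2 ^ (2*k+3) := by
  rw [show 2*k+3 = (2*k+2)+1 by ring, s_succ]

lemma sEven (k : ℕ) : sR (2*k+4) = sR (2*k+3) + X ^ 2 ^ (2*k+4) := by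
  rw [show 2*k+4 = (2*k+3)+1 by ring, s_succ]

lemma tOdd (k : ℕ) : tR (2*k+3) = tR (2*k+2) + X ^ 2 ^ (2*k+3) * (sR (2*k+2) - X - X^2) := by
  rw [show 2*k+3 = (2*k+2)+1 by ring, t_succ (2*k+2) (by omega)]

lemma tEven (k : ℕ) : tR (2*k+4) = tR (2*k+3) + X ^ 2 ^ (2*k+4) * (sR (2*k+3) - X - X^2) := by
  rw [show 2*k+4 = (2*k+3)+1 by ring, t_succ (2*k+3) (by omega)]

lemma geOdd (k : ℕ) : seR (k+1) = sR (2*k+2) - soR k := by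
  rw [interleave2]; ring

lemma goEven (k : ℕ) : soR (k+1) = sR (2*k+3) - seR (k+1) := by
  rw [show 2*k+3 = 2*(k+1)+1 by ring, interleave1]; ring

lemma YpowO (k : ℕ) : (X : R4) ^ 2 ^ (2*k+4) = X ^ 2 ^ (2*k+3) * X ^ 2 ^ (2*k+3) := by
  rw [← pow_add]
  congr 1
  rw [show 2*k+4 = (2*k+3)+1 by ring, pow_succ]
  ring

lemma YpowE (k : ℕ) : (X : R4) ^ 2 ^ (2*k+5) = X ^ 2 ^ (2*k+4) * X ^ 2 ^ (2*k+4) := by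
  rw [← pow_add]
  congr 1
  rw [show 2*k+5 = (2*k+4)+1 by ring, pow_succ]
  ring

lemma negYE (k : ℕ) : (-X : R4) ^ 2 ^ (2*k+3) = X ^ 2 ^ (2*k+3) := by
  rw [show 2*k+3 = (2*k+2)+1 by ring, neg_pow_two_pow]

lemma negYO (k : ℕ) : (-X : R4) ^ 2 ^ (2*k+4) = X ^ 2 ^ (2*k+4) := by
  rw [show 2*k+4 = (2*k+3)+1 by ring, neg_pow_two_pow]

lemma hSe (k : ℕ) : sR (2*k+2) ^ 2 = sR (2*k+2) + X ^ 2 ^ (2*k+3) + 3*X + 2*tR (2*k+2)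
    + 2*(X+X^2)*sR (2*k+2) + 2*(X^2+X^3+X^4) := by
  rw [sq_s (2*k+2) (by omega), show 2*k+2+1 = 2*k+3 by ring, sOdd]

lemma hSo (k : ℕ) : sR (2*k+3) ^ 2 = sR (2*k+3) + X ^ 2 ^ (2*k+4) + 3*X + 2*tR (2*k+3)
    + 2*(X+X^2)*sR (2*k+3) + 2*(X^2+X^3+X^4) := by
  rw [sq_s (2*k+3) (by omega), show 2*k+3+1 = 2*k+4 by ring, sEven]

noncomputable def FAE (k : ℕ) : Matrix (Fin 2) (Fin 2) R4 :=
  !![(4 + (X ^ 2 ^ (2*k+3)) + 2 * tR (2*k+2) + 5 * sR (2*k+2) + 2 * X * soR k + 2 * X * tR (2*k+2) + 2 * X ^ 2 + 2 * X ^ 3 * sR (2*k+2) + 2 * X ^ 5 : R4),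
     (X + 2 * X * soR k + 2 * X * tR (2*k+2) + 2 * X ^ 2 + 2 * X ^ 3 + 2 * X ^ 3 * sR (2*k+2) + 2 * X ^ 4 + 2 * X ^ 5 : R4);
     (1 + 2 * sR (2*k+2) + 2 * X + 2 * X * sR (2*k+2) : R4),
     (1 + (X ^ 2 ^ (2*k+3)) + 2 * tR (2*k+2) + 3 * sR (2*k+2) + 2 * X * soR k + 2 * X * tR (2*k+2) + 2 * X ^ 2 + 2 * X ^ 3 * sR (2*k+2) + 2 * X ^ 5 : R4)]

noncomputable def FBE (k : ℕ) : Matrix (Fin 2) (Fin 2) R4 :=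
  !![(4 + (X ^ 2 ^ (2*k+3)) + 2 * tR (2*k+2) + 5 * sR (2*k+2) + 2 * X * soR k + 2 * X * tR (2*k+2) + 2 * X * sR (2*k+2) + 2 * X ^ 2 + 2 * X ^ 3 * sR (2*k+2) + 2 * X ^ 5 : R4),
     (X + 2 * X * soR k + 2 * X * tR (2*k+2) + 2 * X * sR (2*k+2) + 4 * X ^ 2 + 2 * X ^ 3 + 2 * X ^ 3 * sR (2*k+2) + 2 * X ^ 4 + 2 * X ^ 5 : R4);
     (1 + 2 * sR (2*k+2) + 4 * X + 2 * X * sR (2*k+2) : R4),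
     (1 + (X ^ 2 ^ (2*k+3)) + 2 * tR (2*k+2) + 3 * sR (2*k+2) + 2 * X * soR k + 2 * X * tR (2*k+2) + 2 * X * sR (2*k+2) + 2 * X ^ 2 + 2 * X ^ 3 * sR (2*k+2) + 2 * X ^ 5 : R4)]

noncomputable def FAO (k : ℕ) : Matrix (Fin 2) (Fin 2) R4 :=
  !![(4 + (X ^ 2 ^ (2*k+4)) + 2 * tR (2*k+3) + 5 * sR (2*k+3) + 2 * X * seR (k+1) + 2 * X * tR (2*k+3) + 2 * X ^ 2 + 2 * X ^ 3 * sR (2*k+3) + 2 * X ^ 5 : R4),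
     (X + 2 * X * seR (k+1) + 2 * X * tR (2*k+3) + 2 * X ^ 3 + 2 * X ^ 3 * sR (2*k+3) + 2 * X ^ 4 + 2 * X ^ 5 : R4);
     (1 + 2 * sR (2*k+3) + 2 * X * sR (2*k+3) : R4),
     (1 + (X ^ 2 ^ (2*k+4)) + 2 * tR (2*k+3) + 3 * sR (2*k+3) + 2 * X * seR (k+1) + 2 * X * tR (2*k+3) + 2 * X ^ 2 + 2 * X ^ 3 * sR (2*k+3) + 2 * X ^ 5 : R4)]

noncomputable def FBO (k : ℕ) : Matrix (Fin 2) (Fin 2) R4 :=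
  !![(4 + (X ^ 2 ^ (2*k+4)) + 2 * tR (2*k+3) + 5 * sR (2*k+3) + 2 * X * seR (k+1) + 2 * X * tR (2*k+3) + 2 * X * sR (2*k+3) + 2 * X ^ 2 + 2 * X ^ 3 * sR (2*k+3) + 2 * X ^ 5 : R4),
     (X + 2 * X * seR (k+1) + 2 * X * tR (2*k+3) + 2 * X * sR (2*k+3) + 2 * X ^ 2 + 2 * X ^ 3 + 2 * X ^ 3 * sR (2*k+3) + 2 * X ^ 4 + 2 * X ^ 5 : R4);
     (1 + 2 * sR (2*k+3) + 2 * X + 2 * X * sR (2*k+3) : R4),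
     (1 + (X ^ 2 ^ (2*k+4)) + 2 * tR (2*k+3) + 3 * sR (2*k+3) + 2 * X * seR (k+1) + 2 * X * tR (2*k+3) + 2 * X * sR (2*k+3) + 2 * X ^ 2 + 2 * X ^ 3 * sR (2*k+3) + 2 * X ^ 5 : R4)]

lemma stepEA (k : ℕ) : FAE k * FBE k = FAO k := by
  simp only [FAE, FBE, FAO]
  rw [Matrix.mul_fin_two]
  refine m2ext ?_ ?_ ?_ ?_ <;> simp only [negYE, sOdd, tOdd, geOdd, YpowO]
  · linear_combination (25 + 10 * X + 24 * X ^ 3 + 8 * X ^ 4 + 4 * X ^ 6 : R4) * (hSe k) + (3 + 7 * (X ^ 2 ^ (2*k+3)) + 16 * tR (2*k+2) + tR (2*k+2) * (X ^ 2 ^ (2*k+3)) + tR (2*k+2) ^ 2 + 15 * sR (2*k+2) + 2 * sR (2*k+2) * (X ^ 2 ^ (2*k+3)) + 5 * sR (2*k+2) * tR (2*k+2) + 19 * X + 3 * X * (X ^ 2 ^ (2*k+3)) + 5 * X * soR k + X * soR k * (X ^ 2 ^ (2*k+3)) + 9 * X * tR (2*k+2) + X * tR (2*k+2) * (X ^ 2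 ^ (2*k+3)) + 2 * X * tR (2*k+2) * soR k + 2 * X * tR (2*k+2) ^ 2 + 17 * X * sR (2*k+2) + 6 * X * sR (2*k+2) * soR k + 7 * X * sR (2*k+2) * tR (2*k+2) + 25 * X ^ 2 + 2 * X ^ 2 * (X ^ 2 ^ (2*k+3)) + 2 * X ^ 2 * soR k + X ^ 2 * soR k ^ 2 + 4 * X ^ 2 * tR (2*k+2) + 2 * X ^ 2 * tR (2*k+2) * soR k + X ^ 2 * tR (2*k+2) ^ 2 + 24 * X ^ 2 * sR (2*k+2) + 2 * X ^ 2 * sR (2*k+2) * soR k + 2 * X ^ 2 * sR (2*k+2) * tR (2*k+2) + 20 * X ^ 3 + 6 * X ^ 3 * (X ^ 2 ^ (2*k+3)) + 2 * X ^ 3 * soR k + 14 * X ^ 3 * tR (2*k+2) + 18 * X ^ 3 * sR (2*k+2) + X ^ 3 * sR (2*k+2) * (X ^ 2 ^ (2*k+3)) + 2 * X ^ 3 * sR (2*k+2) * tR (2*k+2) + 39 * X ^ 4 + 2 * X ^ 4 * (X ^ 2 ^ (2*k+3)) + 4 * X ^ 4 * tR (2*k+2) + 18 * X ^ 4 * sR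 (2*k+2) + 2 * X ^ 4 * sR (2*k+2) * soR k + 2 * X ^ 4 * sR (2*k+2) * tR (2*k+2) + 29 * X ^ 5 + X ^ 5 * (X ^ 2 ^ (2*k+3)) + 2 * X ^ 5 * tR (2*k+2) + 25 * X ^ 5 * sR (2*k+2) + 18 * X ^ 6 + X ^ 6 * (X ^ 2 ^ (2*k+3)) + 2 * X ^ 6 * soR k + 4 * X ^ 6 * tR (2*k+2) + 7 * X ^ 6 * sR (2*k+2) + 21 * X ^ 7 + 2 * X ^ 7 * sR (2*k+2) + 6 * X ^ 8 + 4 * X ^ 8 * sR (2*k+2) + 2 * X ^ 9 + 3 * X ^ 10 : R4) * four_eq_zero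
  · linear_combination (10 * X + 16 * X ^ 3 + 8 * X ^ 4 + 8 * X ^ 6 : R4) * (hSe k) + (X + 3 * X * (X ^ 2 ^ (2*k+3)) + 3 * X * soR k + X * soR k * (X ^ 2 ^ (2*k+3)) + 8 * X * tR (2*k+2) + X * tR (2*k+2) * (X ^ 2 ^ (2*k+3)) + 2 * X * tR (2*k+2) * soR k + 2 * X * tR (2*k+2) ^ 2 + 6 * X * sR (2*k+2) + 4 * X * sR (2*k+2) * soR k + 5 * X * sR (2*k+2) * tR (2*k+2) + 12 * X ^ 2 + 2 * X ^ 2 * (X ^ 2 ^ (2*k+3)) + X ^ 2 * soR k + 2 * X ^ 2 * soR k ^ 2 + 4 * X ^ 2 * tR (2*k+2) + 4 * X ^ 2 * tR (2*k+2) * soR k + 2 * X ^ 2 * tR (2*k+2) ^ 2 + 12 * X ^ 2 * sR (2*k+2) + 2 * X ^ 2 * sR (2*k+2) * soR k + 2 * X ^ 2 * sR (2*k+2) * tR (2*k+2) + 8 * X ^ 3 + 5 * X ^ 3 * (X ^ 2 ^ (2*k+3)) + 5 * X ^ 3 * soR k + 15 * X ^ 3 * tR (2*k+2) + 17 * X ^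 3 * sR (2*k+2) + X ^ 3 * sR (2*k+2) * (X ^ 2 ^ (2*k+3)) + 2 * X ^ 3 * sR (2*k+2) * tR (2*k+2) + 22 * X ^ 4 + 3 * X ^ 4 * (X ^ 2 ^ (2*k+3)) + 2 * X ^ 4 * soR k + 8 * X ^ 4 * tR (2*k+2) + 16 * X ^ 4 * sR (2*k+2) + 4 * X ^ 4 * sR (2*k+2) * soR k + 4 * X ^ 4 * sR (2*k+2) * tR (2*k+2) + 23 * X ^ 5 + X ^ 5 * (X ^ 2 ^ (2*k+3)) + 2 * X ^ 5 * soR k + 4 * X ^ 5 * tR (2*k+2) + 22 * X ^ 5 * sR (2*k+2) + 15 * X ^ 6 + 2 * X ^ 6 * (X ^ 2 ^ (2*k+3)) + 4 * X ^ 6 * soR k + 8 * X ^ 6 * tR (2*k+2) + 10 * X ^ 6 * sR (2*k+2) + 23 * X ^ 7 + 6 * X ^ 7 * sR (2*k+2) + 10 * X ^ 8 + 8 * X ^ 8 * sR (2*k+2) + 6 * X ^ 9 + 6 * X ^ 10 : R4) * four_eq_zero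
  · linear_combination (16 + 20 * X + 4 * X ^ 2 + 8 * X ^ 3 + 8 * X ^ 4 : R4) * (hSe k) + (1 + 4 * (X ^ 2 ^ (2*k+3)) + 9 * tR (2*k+2) + 8 * sR (2*k+2) + sR (2*k+2) * (X ^ 2 ^ (2*k+3)) + 2 * sR (2*k+2) * tR (2*k+2) + 15 * X + 6 * X * (X ^ 2 ^ (2*k+3)) + X * soR k + 14 * X * tR (2*k+2) + 21 * X * sR (2*k+2) + X * sR (2*k+2) * (X ^ 2 ^ (2*k+3)) + 2 * X * sR (2*k+2) * soR k + 4 * X * sR (2*k+2) * tR (2*k+2) + 24 * X ^ 2 + X ^ 2 * (X ^ 2 ^ (2*k+3)) + 3 * X ^ 2 * soR k + 5 * X ^ 2 * tR (2*k+2) + 22 * X ^ 2 * sR (2*k+2) + 2 * X ^ 2 * sR (2*k+2) * soR k + 2 * X ^ 2 * sR (2*k+2) * tR (2*k+2) + 24 * X ^ 3 + 2 * X ^ 3 * (X ^ 2 ^ (2*k+3)) + 4 * X ^ 3 * tR (2*k+2) + 17 * X ^ 3 * sR (2*k+2) + 26 * X ^ 4 + 2 * X ^ 4 * (X ^ 2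 ^ (2*k+3)) + 4 * X ^ 4 * tR (2*k+2) + 11 * X ^ 4 * sR (2*k+2) + 23 * X ^ 5 + 10 * X ^ 5 * sR (2*k+2) + 13 * X ^ 6 + 6 * X ^ 6 * sR (2*k+2) + 8 * X ^ 7 + 4 * X ^ 8 : R4) * four_eq_zero
  · linear_combination (9 + 10 * X + 4 * X ^ 2 + 16 * X ^ 3 + 8 * X ^ 4 + 4 * X ^ 6 : R4) * (hSe k) + (2 * (X ^ 2 ^ (2*k+3)) + 5 * tR (2*k+2) + tR (2*k+2) * (X ^ 2 ^ (2*k+3)) + tR (2*k+2) ^ 2 + 3 * sR (2*k+2) + sR (2*k+2) * (X ^ 2 ^ (2*k+3)) + 3 * sR (2*k+2) * tR (2*k+2) + 7 * X + 3 * X * (X ^ 2 ^ (2*k+3)) + 2 * X * soR k + X * soR k * (X ^ 2 ^ (2*k+3)) + 6 * X * tR (2*k+2) + X * tR (2*k+2) * (X ^ 2 ^ (2*k+3)) + 2 * X * tR (2*k+2) * soR k + 2 * X * tR (2*k+2) ^ 2 + 8 * X * sR (2*k+2) + 4 * X * sR (2*k+2) * soR k + 5 * X * sR (2*k+2) * tR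 (2*k+2) + 14 * X ^ 2 + 3 * X ^ 2 * (X ^ 2 ^ (2*k+3)) + X ^ 2 * soR k + X ^ 2 * soR k ^ 2 + 5 * X ^ 2 * tR (2*k+2) + 2 * X ^ 2 * tR (2*k+2) * soR k + X ^ 2 * tR (2*k+2) ^ 2 + 17 * X ^ 2 * sR (2*k+2) + 2 * X ^ 2 * sR (2*k+2) * soR k + 2 * X ^ 2 * sR (2*k+2) * tR (2*k+2) + 15 * X ^ 3 + 4 * X ^ 3 * (X ^ 2 ^ (2*k+3)) + 2 * X ^ 3 * soR k + 10 * X ^ 3 * tR (2*k+2) + 16 * X ^ 3 * sR (2*k+2) + X ^ 3 * sR (2*k+2) * (X ^ 2 ^ (2*k+3)) + 2 * X ^ 3 * sR (2*k+2) * tR (2*k+2) + 26 * X ^ 4 + 2 * X ^ 4 * (X ^ 2 ^ (2*k+3)) + 4 * X ^ 4 * tR (2*k+2) + 15 * X ^ 4 * sR (2*k+2) + 2 * X ^ 4 * sR (2*k+2) * soR k + 2 * X ^ 4 * sR (2*k+2) * tR (2*k+2) + 23 * X ^ 5 + X ^ 5 * (X ^ 2 ^ (2*k+3)) + 2 * X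 ^ 5 * tR (2*k+2) + 19 * X ^ 5 * sR (2*k+2) + 15 * X ^ 6 + X ^ 6 * (X ^ 2 ^ (2*k+3)) + 2 * X ^ 6 * soR k + 4 * X ^ 6 * tR (2*k+2) + 7 * X ^ 6 * sR (2*k+2) + 17 * X ^ 7 + 2 * X ^ 7 * sR (2*k+2) + 6 * X ^ 8 + 4 * X ^ 8 * sR (2*k+2) + 2 * X ^ 9 + 3 * X ^ 10 : R4) * four_eq_zero

lemma stepEB (k : ℕ) : FAE k * phi.mapMatrix (FBE k) = FBO k := by
  simp only [FAE, FBE, FBO]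
  rw [mapM2]
  simp only [map_add, map_mul, map_pow, map_one, map_ofNat, map_zero, phi_X, phi_s, phi_t, phi_se, phi_so]
  rw [Matrix.mul_fin_two]
  refine m2ext ?_ ?_ ?_ ?_ <;> simp only [negYE, sOdd, tOdd, geOdd, YpowO]
  · linear_combination (25 + (-10) * X + 4 * X ^ 3 + (-8) * X ^ 4 + (-4) * X ^ 6 : R4) * (hSe k) + (3 + 7 * (X ^ 2 ^ (2*k+3)) + 16 * tR (2*k+2) + tR (2*k+2) * (X ^ 2 ^ (2*k+3)) + tR (2*k+2) ^ 2 + 15 * sR (2*k+2) + 2 * sR (2*k+2) * (X ^ 2 ^ (2*k+3)) + 5 * sR (2*k+2) * tR (2*k+2) + 29 * X + X * soR k + 20 * X * sR (2*k+2) + (-1) * X * sR (2*k+2) * (X ^ 2 ^ (2*k+3)) + X * sR (2*k+2) * soR k + 5 * X ^ 2 + X ^ 2 * (X ^ 2 ^ (2*k+3)) + 5 * X ^ 2 * soR k + (-1) * X ^ 2 * soR k ^ 2 + 5 * X ^ 2 * tR (2*k+2) + (-2) * X ^ 2 * tR (2*k+2) * soR k + (-1) * X ^ 2 * tR (2*k+2)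 ^ 2 + 8 * X ^ 2 * sR (2*k+2) + (-2) * X ^ 2 * sR (2*k+2) * soR k + (-2) * X ^ 2 * sR (2*k+2) * tR (2*k+2) + 12 * X ^ 3 + X ^ 3 * (X ^ 2 ^ (2*k+3)) + (-4) * X ^ 3 * soR k + (-2) * X ^ 3 * tR (2*k+2) + (-5) * X ^ 3 * sR (2*k+2) + 4 * X ^ 4 + (-3) * X ^ 4 * (X ^ 2 ^ (2*k+3)) + (-6) * X ^ 4 * tR (2*k+2) + (-2) * X ^ 4 * sR (2*k+2) * soR k + (-2) * X ^ 4 * sR (2*k+2) * tR (2*k+2) + (-11) * X ^ 5 + (-2) * X ^ 5 * soR k + (-2) * X ^ 5 * tR (2*k+2) + (-6) * X ^ 5 * sR (2*k+2) + (-1) * X ^ 6 + (-1) * X ^ 6 * (X ^ 2 ^ (2*k+3)) + (-2) * X ^ 6 * soR k + (-4) * X ^ 6 * tR (2*k+2) + (-7) * X ^ 6 * sR (2*k+2) + (-9) * X ^ 7 + (-4) * X ^ 7 * sR (2*k+2) + (-6) * X ^ 8 + (-4) * X ^ 8 * sR (2*k+2) + (-4) * X ^ 9 + (-3) * X ^ 10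 : R4) * four_eq_zero
  · linear_combination ((-10) * X + (-4) * X ^ 3 + (-8) * X ^ 4 + (-8) * X ^ 6 : R4) * (hSe k) + ((-1) * X + (-3) * X * (X ^ 2 ^ (2*k+3)) + (-1) * X * soR k + (-7) * X * tR (2*k+2) + (-6) * X * sR (2*k+2) + (-1) * X * sR (2*k+2) * (X ^ 2 ^ (2*k+3)) + (-1) * X * sR (2*k+2) * soR k + (-2) * X * sR (2*k+2) * tR (2*k+2) + (-6) * X ^ 2 + X ^ 2 * (X ^ 2 ^ (2*k+3)) + 2 * X ^ 2 * soR k + (-2) * X ^ 2 * soR k ^ 2 + 3 * X ^ 2 * tR (2*k+2) + (-4) * X ^ 2 * tR (2*k+2) * soR k + (-2) * X ^ 2 * tR (2*k+2) ^ 2 + (-4) * X ^ 2 * sR (2*k+2) + (-2) * X ^ 2 * sR (2*k+2) * soR k + (-2) * X ^ 2 * sR (2*k+2) * tR (2*k+2) + (-5) * X ^ 3 + (-1) * X ^ 3 * (X ^ 2 ^ (2*k+3)) + (-3) * X ^ 3 * soR k + (-5) * X ^ 3 * tR (2*k+2) + (-11) * X ^ 3 * sR (2*k+2) + (-8) * X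 ^ 4 + (-2) * X ^ 4 * (X ^ 2 ^ (2*k+3)) + (-2) * X ^ 4 * soR k + (-6) * X ^ 4 * tR (2*k+2) + (-4) * X ^ 4 * sR (2*k+2) + (-4) * X ^ 4 * sR (2*k+2) * soR k + (-4) * X ^ 4 * sR (2*k+2) * tR (2*k+2) + (-15) * X ^ 5 + (-4) * X ^ 5 * soR k + (-4) * X ^ 5 * tR (2*k+2) + (-11) * X ^ 5 * sR (2*k+2) + (-8) * X ^ 6 + (-2) * X ^ 6 * (X ^ 2 ^ (2*k+3)) + (-4) * X ^ 6 * soR k + (-8) * X ^ 6 * tR (2*k+2) + (-10) * X ^ 6 * sR (2*k+2) + (-17) * X ^ 7 + (-8) * X ^ 7 * sR (2*k+2) + (-12) * X ^ 8 + (-8) * X ^ 8 * sR (2*k+2) + (-8) * X ^ 9 + (-6) * X ^ 10 : R4) * four_eq_zero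
  · linear_combination (16 + (-4) * X ^ 2 + (-8) * X ^ 4 : R4) * (hSe k) + (1 + 4 * (X ^ 2 ^ (2*k+3)) + 9 * tR (2*k+2) + 8 * sR (2*k+2) + sR (2*k+2) * (X ^ 2 ^ (2*k+3)) + 2 * sR (2*k+2) * tR (2*k+2) + 16 * X + X * tR (2*k+2) + 16 * X * sR (2*k+2) + 12 * X ^ 2 + (-2) * X ^ 2 * (X ^ 2 ^ (2*k+3)) + (-1) * X ^ 2 * soR k + (-5) * X ^ 2 * tR (2*k+2) + 8 * X ^ 2 * sR (2*k+2) + (-2) * X ^ 2 * sR (2*k+2) * soR k + (-2) * X ^ 2 * sR (2*k+2) * tR (2*k+2) + 4 * X ^ 3 + (-2) * X ^ 3 * soR k + (-2) * X ^ 3 * tR (2*k+2) + (-4) * X ^ 3 * sR (2*k+2) + 3 * X ^ 4 + (-2) * X ^ 4 * (X ^ 2 ^ (2*k+3)) + (-4) * X ^ 4 * tR (2*k+2) + (-7) * X ^ 4 * sR (2*k+2) + (-10) * X ^ 5 + (-8) * X ^ 5 * sR (2*k+2) + (-7) * X ^ 6 + (-6) * X ^ 6 * sR (2*k+2) + (-6)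 * X ^ 7 + (-4) * X ^ 8 : R4) * four_eq_zero
  · linear_combination (9 + (-10) * X + (-4) * X ^ 2 + (-4) * X ^ 3 + (-8) * X ^ 4 + (-4) * X ^ 6 : R4) * (hSe k) + (2 * (X ^ 2 ^ (2*k+3)) + 5 * tR (2*k+2) + tR (2*k+2) * (X ^ 2 ^ (2*k+3)) + tR (2*k+2) ^ 2 + 3 * sR (2*k+2) + sR (2*k+2) * (X ^ 2 ^ (2*k+3)) + 3 * sR (2*k+2) * tR (2*k+2) + 8 * X + (-1) * X * (X ^ 2 ^ (2*k+3)) + (-3) * X * tR (2*k+2) + 4 * X * sR (2*k+2) + (-1) * X * sR (2*k+2) * (X ^ 2 ^ (2*k+3)) + (-1) * X * sR (2*k+2) * soR k + (-2) * X * sR (2*k+2) * tR (2*k+2) + (-4) * X ^ 2 + 2 * X ^ 2 * soR k + (-1) * X ^ 2 * soR k ^ 2 + (-2) * X ^ 2 * tR (2*k+2) * soR k + (-1) * X ^ 2 * tR (2*k+2) ^ 2 + (-3) * X ^ 2 * sR (2*k+2) + (-2) * X ^ 2 * sR (2*k+2) * soR k + (-2) * X ^ 2 * sR (2*k+2) *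 tR (2*k+2) + (-1) * X ^ 3 + (-1) * X ^ 3 * (X ^ 2 ^ (2*k+3)) + (-2) * X ^ 3 * soR k + (-4) * X ^ 3 * tR (2*k+2) + (-11) * X ^ 3 * sR (2*k+2) + (-9) * X ^ 4 + (-3) * X ^ 4 * (X ^ 2 ^ (2*k+3)) + (-6) * X ^ 4 * tR (2*k+2) + (-9) * X ^ 4 * sR (2*k+2) + (-2) * X ^ 4 * sR (2*k+2) * soR k + (-2) * X ^ 4 * sR (2*k+2) * tR (2*k+2) + (-17) * X ^ 5 + (-2) * X ^ 5 * soR k + (-2) * X ^ 5 * tR (2*k+2) + (-10) * X ^ 5 * sR (2*k+2) + (-8) * X ^ 6 + (-1) * X ^ 6 * (X ^ 2 ^ (2*k+3)) + (-2) * X ^ 6 * soR k + (-4) * X ^ 6 * tR (2*k+2) + (-7) * X ^ 6 * sR (2*k+2) + (-11) * X ^ 7 + (-4) * X ^ 7 * sR (2*k+2) + (-6) * X ^ 8 + (-4) * X ^ 8 * sR (2*k+2) + (-4) * X ^ 9 + (-3) * X ^ 10 : R4) * four_eq_zero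

lemma stepOA (k : ℕ) : FAO k * FBO k = FAE (k+1) := by
  simp only [FAO, FBO, FAE]
  rw [show 2*(k+1)+2 = 2*k+4 by ring, show 2*(k+1)+3 = 2*k+5 by ring]
  rw [Matrix.mul_fin_two]
  refine m2ext ?_ ?_ ?_ ?_ <;> simp only [negYO, sEven, tEven, goEven, YpowE]
  · linear_combination (25 + 10 * X + 24 * X ^ 3 + 8 * X ^ 4 + 4 * X ^ 6 : R4) * (hSo k) + (3 + 7 * (X ^ 2 ^ (2*k+4)) + 16 * tR (2*k+3) + tR (2*k+3) * (X ^ 2 ^ (2*k+4)) + tR (2*k+3) ^ 2 + 15 * sR (2*k+3) + 2 * sR (2*k+3) * (X ^ 2 ^ (2*k+4)) + 5 * sR (2*k+3) * tR (2*k+3) + 19 * X + 3 * X * (X ^ 2 ^ (2*k+4)) + 5 * X * seR (k+1) + X * seR (k+1) * (X ^ 2 ^ (2*k+4)) + 9 * X * tR (2*k+3) + X * tR (2*k+3) * (X ^ 2 ^ (2*k+4)) + 2 * X * tR (2*k+3) * seR (k+1) + 2 * X * tR (2*k+3) ^ 2 + 17 * X * sR (2*k+3) + 6 * X * sR (2*k+3)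 * seR (k+1) + 7 * X * sR (2*k+3) * tR (2*k+3) + 24 * X ^ 2 + 2 * X ^ 2 * (X ^ 2 ^ (2*k+4)) + X ^ 2 * seR (k+1) + X ^ 2 * seR (k+1) ^ 2 + 3 * X ^ 2 * tR (2*k+3) + 2 * X ^ 2 * tR (2*k+3) * seR (k+1) + X ^ 2 * tR (2*k+3) ^ 2 + 23 * X ^ 2 * sR (2*k+3) + 2 * X ^ 2 * sR (2*k+3) * seR (k+1) + 2 * X ^ 2 * sR (2*k+3) * tR (2*k+3) + 18 * X ^ 3 + 6 * X ^ 3 * (X ^ 2 ^ (2*k+4)) + 2 * X ^ 3 * seR (k+1) + 14 * X ^ 3 * tR (2*k+3) + 17 * X ^ 3 * sR (2*k+3) + X ^ 3 * sR (2*k+3) * (X ^ 2 ^ (2*k+4)) + 2 * X ^ 3 * sR (2*k+3) * tR (2*k+3) + 38 * X ^ 4 + 2 * X ^ 4 * (X ^ 2 ^ (2*k+4)) + 4 * X ^ 4 * tR (2*k+3) + 17 * X ^ 4 * sR (2*k+3) + 2 * X ^ 4 * sR (2*k+3) * seR (k+1) + 2 * X ^ 4 * sR (2*k+3) * tR (2*k+3)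 + 28 * X ^ 5 + X ^ 5 * (X ^ 2 ^ (2*k+4)) + 2 * X ^ 5 * tR (2*k+3) + 25 * X ^ 5 * sR (2*k+3) + 17 * X ^ 6 + X ^ 6 * (X ^ 2 ^ (2*k+4)) + 2 * X ^ 6 * seR (k+1) + 4 * X ^ 6 * tR (2*k+3) + 7 * X ^ 6 * sR (2*k+3) + 21 * X ^ 7 + 2 * X ^ 7 * sR (2*k+3) + 6 * X ^ 8 + 4 * X ^ 8 * sR (2*k+3) + 2 * X ^ 9 + 3 * X ^ 10 : R4) * four_eq_zero
  · linear_combination (10 * X + 16 * X ^ 3 + 8 * X ^ 4 + 8 * X ^ 6 : R4) * (hSo k) + (X + 3 * X * (X ^ 2 ^ (2*k+4)) + 3 * X * seR (k+1) + X * seR (k+1) * (X ^ 2 ^ (2*k+4)) + 8 * X * tR (2*k+3) + X * tR (2*k+3) * (X ^ 2 ^ (2*k+4)) + 2 * X * tR (2*k+3) * seR (k+1) + 2 * X * tR (2*k+3) ^ 2 + 6 * X * sR (2*k+3) + 4 * X * sR (2*k+3) * seR (k+1) + 5 * X * sR (2*k+3) * tR (2*k+3) + 9 * X ^ 2 + X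 ^ 2 * (X ^ 2 ^ (2*k+4)) + X ^ 2 * seR (k+1) + 2 * X ^ 2 * seR (k+1) ^ 2 + 2 * X ^ 2 * tR (2*k+3) + 4 * X ^ 2 * tR (2*k+3) * seR (k+1) + 2 * X ^ 2 * tR (2*k+3) ^ 2 + 8 * X ^ 2 * sR (2*k+3) + 2 * X ^ 2 * sR (2*k+3) * seR (k+1) + 2 * X ^ 2 * sR (2*k+3) * tR (2*k+3) + 8 * X ^ 3 + 5 * X ^ 3 * (X ^ 2 ^ (2*k+4)) + 3 * X ^ 3 * seR (k+1) + 13 * X ^ 3 * tR (2*k+3) + 16 * X ^ 3 * sR (2*k+3) + X ^ 3 * sR (2*k+3) * (X ^ 2 ^ (2*k+4)) + 2 * X ^ 3 * sR (2*k+3) * tR (2*k+3) + 20 * X ^ 4 + 3 * X ^ 4 * (X ^ 2 ^ (2*k+4)) + 2 * X ^ 4 * seR (k+1) + 8 * X ^ 4 * tR (2*k+3) + 16 * X ^ 4 * sR (2*k+3) + 4 * X ^ 4 * sR (2*k+3) * seR (k+1) + 4 * X ^ 4 * sR (2*k+3) * tR (2*k+3) + 23 * X ^ 5 + X ^ 5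 * (X ^ 2 ^ (2*k+4)) + 2 * X ^ 5 * seR (k+1) + 4 * X ^ 5 * tR (2*k+3) + 20 * X ^ 5 * sR (2*k+3) + 15 * X ^ 6 + 2 * X ^ 6 * (X ^ 2 ^ (2*k+4)) + 4 * X ^ 6 * seR (k+1) + 8 * X ^ 6 * tR (2*k+3) + 10 * X ^ 6 * sR (2*k+3) + 21 * X ^ 7 + 6 * X ^ 7 * sR (2*k+3) + 10 * X ^ 8 + 8 * X ^ 8 * sR (2*k+3) + 6 * X ^ 9 + 6 * X ^ 10 : R4) * four_eq_zero
  · linear_combination (16 + 20 * X + 4 * X ^ 2 + 8 * X ^ 3 + 8 * X ^ 4 : R4) * (hSo k) + (1 + 4 * (X ^ 2 ^ (2*k+4)) + 9 * tR (2*k+3) + 8 * sR (2*k+3) + sR (2*k+3) * (X ^ 2 ^ (2*k+4)) + 2 * sR (2*k+3) * tR (2*k+3) + 12 * X + 5 * X * (X ^ 2 ^ (2*k+4)) + X * seR (k+1) + 12 * X * tR (2*k+3) + 17 * X * sR (2*k+3) + X * sR (2*k+3) * (X ^ 2 ^ (2*k+4)) + 2 * X * sR (2*k+3) * seR (k+1)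 + 4 * X * sR (2*k+3) * tR (2*k+3) + 24 * X ^ 2 + X ^ 2 * (X ^ 2 ^ (2*k+4)) + X ^ 2 * seR (k+1) + 3 * X ^ 2 * tR (2*k+3) + 21 * X ^ 2 * sR (2*k+3) + 2 * X ^ 2 * sR (2*k+3) * seR (k+1) + 2 * X ^ 2 * sR (2*k+3) * tR (2*k+3) + 22 * X ^ 3 + 2 * X ^ 3 * (X ^ 2 ^ (2*k+4)) + 4 * X ^ 3 * tR (2*k+3) + 17 * X ^ 3 * sR (2*k+3) + 26 * X ^ 4 + 2 * X ^ 4 * (X ^ 2 ^ (2*k+4)) + 4 * X ^ 4 * tR (2*k+3) + 9 * X ^ 4 * sR (2*k+3) + 23 * X ^ 5 + 10 * X ^ 5 * sR (2*k+3) + 11 * X ^ 6 + 6 * X ^ 6 * sR (2*k+3) + 8 * X ^ 7 + 4 * X ^ 8 : R4) * four_eq_zero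
  · linear_combination (9 + 10 * X + 4 * X ^ 2 + 16 * X ^ 3 + 8 * X ^ 4 + 4 * X ^ 6 : R4) * (hSo k) + (2 * (X ^ 2 ^ (2*k+4)) + 5 * tR (2*k+3) + tR (2*k+3) * (X ^ 2 ^ (2*k+4)) + tR (2*k+3) ^ 2 + 3 * sR (2*k+3) + sR (2*k+3) * (X ^ 2 ^ (2*k+4)) + 3 * sR (2*k+3) * tR (2*k+3) + 7 * X + 3 * X * (X ^ 2 ^ (2*k+4)) + 2 * X * seR (k+1) + X * seR (k+1) * (X ^ 2 ^ (2*k+4)) + 6 * X * tR (2*k+3) + X * tR (2*k+3) * (X ^ 2 ^ (2*k+4)) + 2 * X * tR (2*k+3) * seR (k+1) + 2 * X * tR (2*k+3) ^ 2 + 8 * X * sR (2*k+3) + 4 * X * sR (2*k+3) * seR (k+1) + 5 * X * sR (2*k+3) * tR (2*k+3) + 13 * X ^ 2 + 3 * X ^ 2 * (X ^ 2 ^ (2*k+4)) + X ^ 2 * seR (k+1) ^ 2 + 4 * X ^ 2 * tR (2*k+3) + 2 * X ^ 2 * tR (2*k+3) * seR (k+1) + X ^ 2 * tR (2*k+3)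 ^ 2 + 15 * X ^ 2 * sR (2*k+3) + 2 * X ^ 2 * sR (2*k+3) * seR (k+1) + 2 * X ^ 2 * sR (2*k+3) * tR (2*k+3) + 13 * X ^ 3 + 4 * X ^ 3 * (X ^ 2 ^ (2*k+4)) + 2 * X ^ 3 * seR (k+1) + 10 * X ^ 3 * tR (2*k+3) + 15 * X ^ 3 * sR (2*k+3) + X ^ 3 * sR (2*k+3) * (X ^ 2 ^ (2*k+4)) + 2 * X ^ 3 * sR (2*k+3) * tR (2*k+3) + 25 * X ^ 4 + 2 * X ^ 4 * (X ^ 2 ^ (2*k+4)) + 4 * X ^ 4 * tR (2*k+3) + 14 * X ^ 4 * sR (2*k+3) + 2 * X ^ 4 * sR (2*k+3) * seR (k+1) + 2 * X ^ 4 * sR (2*k+3) * tR (2*k+3) + 22 * X ^ 5 + X ^ 5 * (X ^ 2 ^ (2*k+4)) + 2 * X ^ 5 * tR (2*k+3) + 19 * X ^ 5 * sR (2*k+3) + 14 * X ^ 6 + X ^ 6 * (X ^ 2 ^ (2*k+4)) + 2 * X ^ 6 * seR (k+1) + 4 * X ^ 6 * tR (2*k+3) + 7 * X ^ 6 * sR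 (2*k+3) + 17 * X ^ 7 + 2 * X ^ 7 * sR (2*k+3) + 6 * X ^ 8 + 4 * X ^ 8 * sR (2*k+3) + 2 * X ^ 9 + 3 * X ^ 10 : R4) * four_eq_zero

lemma stepOB (k : ℕ) : FAO k * phi.mapMatrix (FBO k) = FBE (k+1) := by
  simp only [FAO, FBO, FBE]
  rw [mapM2]
  simp only [map_add, map_mul, map_pow, map_one, map_ofNat, map_zero, phi_X, phi_s, phi_t, phi_se, phi_so]
  rw [show 2*(k+1)+2 = 2*k+4 by ring, show 2*(k+1)+3 = 2*k+5 by ring]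
  rw [Matrix.mul_fin_two]
  refine m2ext ?_ ?_ ?_ ?_ <;> simp only [negYO, sEven, tEven, goEven, YpowE]
  · linear_combination (25 + (-10) * X + 4 * X ^ 3 + (-8) * X ^ 4 + (-4) * X ^ 6 : R4) * (hSo k) + (3 + 7 * (X ^ 2 ^ (2*k+4)) + 16 * tR (2*k+3) + tR (2*k+3) * (X ^ 2 ^ (2*k+4)) + tR (2*k+3) ^ 2 + 15 * sR (2*k+3) + 2 * sR (2*k+3) * (X ^ 2 ^ (2*k+4)) + 5 * sR (2*k+3) * tR (2*k+3) + 29 * X + X * seR (k+1) + 20 * X * sR (2*k+3) + (-1) * X * sR (2*k+3) * (X ^ 2 ^ (2*k+4)) + X * sR (2*k+3) * seR (k+1) + X ^ 2 + 6 * X ^ 2 * seR (k+1) + (-1) * X ^ 2 * seR (k+1) ^ 2 + 4 * X ^ 2 * tR (2*k+3) + (-2) * X ^ 2 * tR (2*k+3) * seR (k+1) + (-1) * X ^ 2 * tR (2*k+3) ^ 2 + 2 * X ^ 2 * sR (2*k+3) + (-2) * X ^ 2 * sR (2*k+3) * seR (k+1) + (-2) * X ^ 2 * sR (2*k+3) *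 tR (2*k+3) + 12 * X ^ 3 + X ^ 3 * (X ^ 2 ^ (2*k+4)) + (-6) * X ^ 3 * seR (k+1) + (-4) * X ^ 3 * tR (2*k+3) + (-4) * X ^ 3 * sR (2*k+3) + 5 * X ^ 4 + (-3) * X ^ 4 * (X ^ 2 ^ (2*k+4)) + (-6) * X ^ 4 * tR (2*k+3) + X ^ 4 * sR (2*k+3) + (-2) * X ^ 4 * sR (2*k+3) * seR (k+1) + (-2) * X ^ 4 * sR (2*k+3) * tR (2*k+3) + (-10) * X ^ 5 + (-2) * X ^ 5 * seR (k+1) + (-2) * X ^ 5 * tR (2*k+3) + (-8) * X ^ 5 * sR (2*k+3) + (-1) * X ^ 6 * (X ^ 2 ^ (2*k+4)) + (-2) * X ^ 6 * seR (k+1) + (-4) * X ^ 6 * tR (2*k+3) + (-7) * X ^ 6 * sR (2*k+3) + (-11) * X ^ 7 + (-4) * X ^ 7 * sR (2*k+3) + (-6) * X ^ 8 + (-4) * X ^ 8 * sR (2*k+3) + (-4) * X ^ 9 + (-3) * X ^ 10 : R4) * four_eq_zero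
  · linear_combination ((-10) * X + (-4) * X ^ 3 + (-8) * X ^ 4 + (-8) * X ^ 6 : R4) * (hSo k) + ((-1) * X + (-3) * X * (X ^ 2 ^ (2*k+4)) + (-1) * X * seR (k+1) + (-7) * X * tR (2*k+3) + (-6) * X * sR (2*k+3) + (-1) * X * sR (2*k+3) * (X ^ 2 ^ (2*k+4)) + (-1) * X * sR (2*k+3) * seR (k+1) + (-2) * X * sR (2*k+3) * tR (2*k+3) + (-13) * X ^ 2 + (-1) * X ^ 2 * (X ^ 2 ^ (2*k+4)) + 2 * X ^ 2 * seR (k+1) + (-2) * X ^ 2 * seR (k+1) ^ 2 + (-1) * X ^ 2 * tR (2*k+3) + (-4) * X ^ 2 * tR (2*k+3) * seR (k+1) + (-2) * X ^ 2 * tR (2*k+3) ^ 2 + (-13) * X ^ 2 * sR (2*k+3) + (-2) * X ^ 2 * sR (2*k+3) * seR (k+1) + (-2) * X ^ 2 * sR (2*k+3) * tR (2*k+3) + (-9) * X ^ 3 + (-1) * X ^ 3 * (X ^ 2 ^ (2*k+4)) + (-7) * X ^ 3 * seR (k+1) + (-9) * X ^ 3 * tR (2*k+3) + (-10) * X ^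 3 * sR (2*k+3) + (-10) * X ^ 4 + (-2) * X ^ 4 * (X ^ 2 ^ (2*k+4)) + (-2) * X ^ 4 * seR (k+1) + (-6) * X ^ 4 * tR (2*k+3) + (-4) * X ^ 4 * sR (2*k+3) + (-4) * X ^ 4 * sR (2*k+3) * seR (k+1) + (-4) * X ^ 4 * sR (2*k+3) * tR (2*k+3) + (-17) * X ^ 5 + (-4) * X ^ 5 * seR (k+1) + (-4) * X ^ 5 * tR (2*k+3) + (-15) * X ^ 5 * sR (2*k+3) + (-8) * X ^ 6 + (-2) * X ^ 6 * (X ^ 2 ^ (2*k+4)) + (-4) * X ^ 6 * seR (k+1) + (-8) * X ^ 6 * tR (2*k+3) + (-10) * X ^ 6 * sR (2*k+3) + (-21) * X ^ 7 + (-8) * X ^ 7 * sR (2*k+3) + (-12) * X ^ 8 + (-8) * X ^ 8 * sR (2*k+3) + (-8) * X ^ 9 + (-6) * X ^ 10 : R4) * four_eq_zero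
  · linear_combination (16 + (-4) * X ^ 2 + (-8) * X ^ 4 : R4) * (hSo k) + (1 + 4 * (X ^ 2 ^ (2*k+4)) + 9 * tR (2*k+3) + 8 * sR (2*k+3) + sR (2*k+3) * (X ^ 2 ^ (2*k+4)) + 2 * sR (2*k+3) * tR (2*k+3) + 14 * X + X * tR (2*k+3) + 15 * X * sR (2*k+3) + 6 * X ^ 2 + (-2) * X ^ 2 * (X ^ 2 ^ (2*k+4)) + X ^ 2 * seR (k+1) + (-3) * X ^ 2 * tR (2*k+3) + 7 * X ^ 2 * sR (2*k+3) + (-2) * X ^ 2 * sR (2*k+3) * seR (k+1) + (-2) * X ^ 2 * sR (2*k+3) * tR (2*k+3) + 6 * X ^ 3 + (-2) * X ^ 3 * seR (k+1) + (-2) * X ^ 3 * tR (2*k+3) + (-6) * X ^ 3 * sR (2*k+3) + 3 * X ^ 4 + (-2) * X ^ 4 * (X ^ 2 ^ (2*k+4)) + (-4) * X ^ 4 * tR (2*k+3) + (-5) * X ^ 4 * sR (2*k+3) + (-8) * X ^ 5 + (-8) * X ^ 5 * sR (2*k+3) + (-5) * X ^ 6 + (-6) * X ^ 6 * sR (2*k+3)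 + (-6) * X ^ 7 + (-4) * X ^ 8 : R4) * four_eq_zero
  · linear_combination (9 + (-10) * X + (-4) * X ^ 2 + (-4) * X ^ 3 + (-8) * X ^ 4 + (-4) * X ^ 6 : R4) * (hSo k) + (2 * (X ^ 2 ^ (2*k+4)) + 5 * tR (2*k+3) + tR (2*k+3) * (X ^ 2 ^ (2*k+4)) + tR (2*k+3) ^ 2 + 3 * sR (2*k+3) + sR (2*k+3) * (X ^ 2 ^ (2*k+4)) + 3 * sR (2*k+3) * tR (2*k+3) + 8 * X + (-1) * X * (X ^ 2 ^ (2*k+4)) + (-3) * X * tR (2*k+3) + 4 * X * sR (2*k+3) + (-1) * X * sR (2*k+3) * (X ^ 2 ^ (2*k+4)) + (-1) * X * sR (2*k+3) * seR (k+1) + (-2) * X * sR (2*k+3) * tR (2*k+3) + (-6) * X ^ 2 + (-1) * X ^ 2 * (X ^ 2 ^ (2*k+4)) + 3 * X ^ 2 * seR (k+1) + (-1) * X ^ 2 * seR (k+1) ^ 2 + (-1) * X ^ 2 * tR (2*k+3) + (-2) * X ^ 2 * tR (2*k+3) * seR (k+1) + (-1) * X ^ 2 * tR (2*k+3) ^ 2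 + (-8) * X ^ 2 * sR (2*k+3) + (-2) * X ^ 2 * sR (2*k+3) * seR (k+1) + (-2) * X ^ 2 * sR (2*k+3) * tR (2*k+3) + (-1) * X ^ 3 + (-1) * X ^ 3 * (X ^ 2 ^ (2*k+4)) + (-4) * X ^ 3 * seR (k+1) + (-6) * X ^ 3 * tR (2*k+3) + (-14) * X ^ 3 * sR (2*k+3) + (-10) * X ^ 4 + (-3) * X ^ 4 * (X ^ 2 ^ (2*k+4)) + (-6) * X ^ 4 * tR (2*k+3) + (-8) * X ^ 4 * sR (2*k+3) + (-2) * X ^ 4 * sR (2*k+3) * seR (k+1) + (-2) * X ^ 4 * sR (2*k+3) * tR (2*k+3) + (-16) * X ^ 5 + (-2) * X ^ 5 * seR (k+1) + (-2) * X ^ 5 * tR (2*k+3) + (-12) * X ^ 5 * sR (2*k+3) + (-7) * X ^ 6 + (-1) * X ^ 6 * (X ^ 2 ^ (2*k+4)) + (-2) * X ^ 6 * seR (k+1) + (-4) * X ^ 6 * tR (2*k+3) + (-7) * X ^ 6 * sR (2*k+3) + (-13) * X ^ 7 + (-4) * X ^ 7 * sR (2*k+3) + (-6) * X ^ 8 +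 (-4) * X ^ 8 * sR (2*k+3) + (-4) * X ^ 9 + (-3) * X ^ 10 : R4) * four_eq_zero

noncomputable def cA0 : Matrix (Fin 2) (Fin 2) R4 :=
  !![(0 : R4),
     (X : R4);
     (1 : R4),
     (1 : R4)]

noncomputable def cB0 : Matrix (Fin 2) (Fin 2) R4 :=
  !![(0 : R4),
     (X : R4);
     (1 : R4),
     (1 : R4)]

noncomputable def cBb0 : Matrix (Fin 2) (Fin 2) R4 :=
  !![(0 : R4),
     (3 * X : R4);
     (1 : R4),
     (1 : R4)]

noncomputable def cA1 : Matrix (Fin 2) (Fin 2) R4 :=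
  !![(X : R4),
     (X : R4);
     (1 : R4),
     (1 + X : R4)]

noncomputable def cB1 : Matrix (Fin 2) (Fin 2) R4 :=
  !![(X : R4),
     (X : R4);
     (1 : R4),
     (1 + 3 * X : R4)]

noncomputable def cBb1 : Matrix (Fin 2) (Fin 2) R4 :=
  !![(3 * X : R4),
     (3 * X : R4);
     (1 : R4),
     (1 + X : R4)]

noncomputable def cA2 : Matrix (Fin 2) (Fin 2) R4 :=
  !![(X + X ^ 2 : R4),
     (X : R4);
     (1 + 2 * X : R4),
     (1 + X + 3 * X ^ 2 : R4)]

noncomputable def cB2 : Matrix (Fin 2) (Fin 2) R4 :=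
  !![(X + 3 * X ^ 2 : R4),
     (X : R4);
     (1 : R4),
     (1 + X + X ^ 2 : R4)]

noncomputable def cBb2 : Matrix (Fin 2) (Fin 2) R4 :=
  !![(3 * X + 3 * X ^ 2 : R4),
     (3 * X : R4);
     (1 : R4),
     (1 + 3 * X + X ^ 2 : R4)]

noncomputable def cA3 : Matrix (Fin 2) (Fin 2) R4 :=
  !![(X + X ^ 2 + 3 * X ^ 4 : R4),
     (X + 2 * X ^ 2 + 2 * X ^ 3 : R4);
     (1 + 2 * X + 2 * X ^ 3 : R4),
     (1 + 3 * X + 3 * X ^ 2 + 3 * X ^ 4 : R4)]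

noncomputable def cB3 : Matrix (Fin 2) (Fin 2) R4 :=
  !![(X + 3 * X ^ 2 + 2 * X ^ 3 + 3 * X ^ 4 : R4),
     (X + 2 * X ^ 2 : R4);
     (1 + 2 * X ^ 3 : R4),
     (1 + 3 * X + X ^ 2 + 2 * X ^ 3 + 3 * X ^ 4 : R4)]

noncomputable def cBb3 : Matrix (Fin 2) (Fin 2) R4 :=
  !![(3 * X + 3 * X ^ 2 + 2 * X ^ 3 + 3 * X ^ 4 : R4),
     (3 * X + 2 * X ^ 2 : R4);
     (1 + 2 * X ^ 3 : R4),
     (1 + X + X ^ 2 + 2 * X ^ 3 + 3 * X ^ 4 : R4)]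

noncomputable def cA4 : Matrix (Fin 2) (Fin 2) R4 :=
  !![(X + 3 * X ^ 2 + 2 * X ^ 3 + 3 * X ^ 4 + 2 * X ^ 7 + X ^ 8 : R4),
     (X + 2 * X ^ 2 + 2 * X ^ 7 : R4);
     (1 + 2 * X ^ 3 + 2 * X ^ 4 + 2 * X ^ 5 : R4),
     (1 + 3 * X + X ^ 2 + 2 * X ^ 3 + X ^ 4 + 2 * X ^ 7 + X ^ 8 : R4)]

noncomputable def cB4 : Matrix (Fin 2) (Fin 2) R4 :=
  !![(X + X ^ 2 + 3 * X ^ 4 + 2 * X ^ 5 + 2 * X ^ 7 + X ^ 8 : R4),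
     (X + 2 * X ^ 2 + 2 * X ^ 3 + 2 * X ^ 5 + 2 * X ^ 7 : R4);
     (1 + 2 * X + 2 * X ^ 3 + 2 * X ^ 4 + 2 * X ^ 5 : R4),
     (1 + 3 * X + 3 * X ^ 2 + X ^ 4 + 2 * X ^ 5 + 2 * X ^ 7 + X ^ 8 : R4)]

lemma bP0 : phi.mapMatrix cB0 = cBb0 := by
  simp only [cB0, cBb0]
  rw [mapM2]
  simp only [map_add, map_mul, map_pow, map_one, map_ofNat, map_zero, phi_X]
  refine m2ext ?_ ?_ ?_ ?_
  · ring
  · linear_combination ((-1) * X : R4) * four_eq_zero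
  · ring
  · ring

lemma bA0 : cA0 * cB0 = cA1 := by
  simp only [cA0, cB0, cA1]
  rw [Matrix.mul_fin_two]
  refine m2ext ?_ ?_ ?_ ?_
  · ring
  · ring
  · ring
  · ring

lemma bB0 : cA0 * cBb0 = cB1 := by
  simp only [cA0, cBb0, cB1]
  rw [Matrix.mul_fin_two]
  refine m2ext ?_ ?_ ?_ ?_
  · ring
  · ring
  · ring
  · ring

lemma bP1 : phi.mapMatrix cB1 = cBb1 := by
  simp only [cB1, cBb1]
  rw [mapM2]
  simp only [map_add, map_mul, map_pow, map_one, map_ofNat, map_zero, phi_X]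
  refine m2ext ?_ ?_ ?_ ?_
  · linear_combination ((-1) * X : R4) * four_eq_zero
  · linear_combination ((-1) * X : R4) * four_eq_zero
  · ring
  · linear_combination ((-1) * X : R4) * four_eq_zero

lemma bA1 : cA1 * cB1 = cA2 := by
  simp only [cA1, cB1, cA2]
  rw [Matrix.mul_fin_two]
  refine m2ext ?_ ?_ ?_ ?_
  · ring
  · linear_combination (X ^ 2 : R4) * four_eq_zero
  · ring
  · linear_combination (X : R4) * four_eq_zero

lemma bB1 : cA1 * cBb1 = cB2 := by
  simp only [cA1, cBb1, cB2]
  rw [Matrix.mul_fin_two]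
  refine m2ext ?_ ?_ ?_ ?_
  · ring
  · linear_combination (X ^ 2 : R4) * four_eq_zero
  · linear_combination (X : R4) * four_eq_zero
  · linear_combination (X : R4) * four_eq_zero

lemma bP2 : phi.mapMatrix cB2 = cBb2 := by
  simp only [cB2, cBb2]
  rw [mapM2]
  simp only [map_add, map_mul, map_pow, map_one, map_ofNat, map_zero, phi_X]
  refine m2ext ?_ ?_ ?_ ?_
  · linear_combination ((-1) * X : R4) * four_eq_zero
  · linear_combination ((-1) * X : R4) * four_eq_zero
  · ring
  · linear_combination ((-1) * X : R4) * four_eq_zero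

lemma bA2 : cA2 * cB2 = cA3 := by
  simp only [cA2, cB2, cA3]
  rw [Matrix.mul_fin_two]
  refine m2ext ?_ ?_ ?_ ?_
  · linear_combination (X ^ 3 : R4) * four_eq_zero
  · ring
  · linear_combination (2 * X ^ 2 + X ^ 3 : R4) * four_eq_zero
  · linear_combination (X ^ 2 + X ^ 3 : R4) * four_eq_zero

lemma bB2 : cA2 * cBb2 = cB3 := by
  simp only [cA2, cBb2, cB3]
  rw [Matrix.mul_fin_two]
  refine m2ext ?_ ?_ ?_ ?_
  · linear_combination (X ^ 3 : R4) * four_eq_zero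
  · linear_combination (X ^ 2 + X ^ 3 : R4) * four_eq_zero
  · linear_combination (X + 3 * X ^ 2 + X ^ 3 : R4) * four_eq_zero
  · linear_combination (X + 3 * X ^ 2 + 2 * X ^ 3 : R4) * four_eq_zero

lemma bP3 : phi.mapMatrix cB3 = cBb3 := by
  simp only [cB3, cBb3]
  rw [mapM2]
  simp only [map_add, map_mul, map_pow, map_one, map_ofNat, map_zero, phi_X]
  refine m2ext ?_ ?_ ?_ ?_
  · linear_combination ((-1) * X + (-1) * X ^ 3 : R4) * four_eq_zero
  · linear_combination ((-1) * X : R4) * four_eq_zero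
  · linear_combination ((-1) * X ^ 3 : R4) * four_eq_zero
  · linear_combination ((-1) * X + (-1) * X ^ 3 : R4) * four_eq_zero

lemma bA3 : cA3 * cB3 = cA4 := by
  simp only [cA3, cB3, cA4]
  rw [Matrix.mul_fin_two]
  refine m2ext ?_ ?_ ?_ ?_
  · linear_combination (X ^ 3 + X ^ 4 + 3 * X ^ 5 + 4 * X ^ 6 + X ^ 7 + 2 * X ^ 8 : R4) * four_eq_zero
  · linear_combination (X ^ 2 + 3 * X ^ 3 + 3 * X ^ 4 + 3 * X ^ 5 + 4 * X ^ 6 + X ^ 7 : R4) * four_eq_zero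
  · linear_combination (X + 2 * X ^ 2 + 2 * X ^ 3 + 4 * X ^ 4 + 4 * X ^ 5 + X ^ 6 + 3 * X ^ 7 : R4) * four_eq_zero
  · linear_combination (X + 4 * X ^ 2 + 4 * X ^ 3 + 4 * X ^ 4 + 7 * X ^ 5 + 3 * X ^ 6 + X ^ 7 + 2 * X ^ 8 : R4) * four_eq_zero

lemma bB3 : cA3 * cBb3 = cB4 := by
  simp only [cA3, cBb3, cB4]
  rw [Matrix.mul_fin_two]
  refine m2ext ?_ ?_ ?_ ?_
  · linear_combination (X ^ 2 + 2 * X ^ 3 + X ^ 4 + 4 * X ^ 5 + 4 * X ^ 6 + X ^ 7 + 2 * X ^ 8 : R4) * four_eq_zero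
  · linear_combination (X ^ 2 + 2 * X ^ 3 + 2 * X ^ 4 + 4 * X ^ 5 + 4 * X ^ 6 + X ^ 7 : R4) * four_eq_zero
  · linear_combination (X + 3 * X ^ 2 + 2 * X ^ 3 + 5 * X ^ 4 + 4 * X ^ 5 + X ^ 6 + 3 * X ^ 7 : R4) * four_eq_zero
  · linear_combination (X + 3 * X ^ 2 + 3 * X ^ 3 + 5 * X ^ 4 + 5 * X ^ 5 + 3 * X ^ 6 + X ^ 7 + 2 * X ^ 8 : R4) * four_eq_zero

lemma bFA : cA4 = FAE 0 := by
  simp only [cA4, FAE]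
  rw [show 2*0+2 = 2 by ring, show 2*0+3 = 3 by ring, show (2:ℕ)^3 = 8 by norm_num]
  rw [s_two, t_small 2 (by norm_num), so_zero]
  refine m2ext ?_ ?_ ?_ ?_
  · linear_combination ((-1) + (-1) * X + (-1) * X ^ 2 + (-1) * X ^ 4 + (-1) * X ^ 5 : R4) * four_eq_zero
  · linear_combination ((-1) * X ^ 3 + (-1) * X ^ 4 + (-1) * X ^ 5 : R4) * four_eq_zero
  · linear_combination ((-1) * X + (-1) * X ^ 2 : R4) * four_eq_zero
  · linear_combination ((-1) * X ^ 2 + (-1) * X ^ 4 + (-1) * X ^ 5 : R4) * four_eq_zero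

lemma bFB : cB4 = FBE 0 := by
  simp only [cB4, FBE]
  rw [show 2*0+2 = 2 by ring, show 2*0+3 = 3 by ring, show (2:ℕ)^3 = 8 by norm_num]
  rw [s_two, t_small 2 (by norm_num), so_zero]
  refine m2ext ?_ ?_ ?_ ?_
  · linear_combination ((-1) + (-1) * X + (-2) * X ^ 2 + (-1) * X ^ 3 + (-1) * X ^ 4 + (-1) * X ^ 5 : R4) * four_eq_zero
  · linear_combination ((-1) * X ^ 2 + (-1) * X ^ 3 + (-1) * X ^ 4 + (-1) * X ^ 5 : R4) * four_eq_zero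
  · linear_combination ((-1) * X + (-1) * X ^ 2 : R4) * four_eq_zero
  · linear_combination ((-1) * X ^ 2 + (-1) * X ^ 3 + (-1) * X ^ 4 + (-1) * X ^ 5 : R4) * four_eq_zero


/-! ### The Rudin–Shapiro sign lemmas and product recursions -/

lemma rL1 (r : ℕ → ℤ) (hr0 : r 0 = 1) (hre : ∀ n, r (2 * n) = r n)
    (hro : ∀ n, r (2 * n + 1) = (-1) ^ n * r n) :
    ∀ m t, t < 2 ^ m → r (2 ^ (m + 1) + t) = r t := by
  intro m
  induction m with
  | zero =>
    intro t ht
    interval_cases t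
    have h2 : r 2 = r 1 := by have := hre 1; simpa using this
    have h1 : r 1 = r 0 := by have := hro 0; simpa using this
    rw [show 2 ^ (0 + 1) + 0 = 2 by norm_num, h2, h1]
  | succ m ih =>
    intro t ht
    have hpow : (2:ℕ) ^ (m + 1) = 2 * 2 ^ m := by ring
    obtain ⟨u, rfl | rfl⟩ := Nat.even_or_odd' t
    · have hu : u < 2 ^ m := by
        have hpow2 : (2:ℕ) ^ (m + 1 + 1) = 2 * 2 ^ (m+1) := by ring
        omega
      rw [show 2 ^ (m + 1 + 1) + 2 * u = 2 * (2 ^ (m + 1) + u) by ring, hre, hre, ih u hu]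
    · have hu : u < 2 ^ m := by
        have hpow2 : (2:ℕ) ^ (m + 1 + 1) = 2 * 2 ^ (m+1) := by ring
        omega
      rw [show 2 ^ (m + 1 + 1) + (2 * u + 1) = 2 * (2 ^ (m + 1) + u) + 1 by ring, hro, hro,
        ih u hu]
      have hpar : ((-1:ℤ)) ^ (2 ^ (m + 1) + u) = (-1) ^ u := by
        rw [pow_add, Even.neg_one_pow ⟨2 ^ m, by ring⟩, one_mul]
      rw [hpar]

lemma rL2 (r : ℕ → ℤ) (hr0 : r 0 = 1) (hre : ∀ n, r (2 * n) = r n)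
    (hro : ∀ n, r (2 * n + 1) = (-1) ^ n * r n) :
    ∀ m t, t < 2 ^ m → r (2 ^ (m + 1) + 2 ^ m + t) = - r (2 ^ m + t) := by
  intro m
  induction m with
  | zero =>
    intro t ht
    interval_cases t
    have h3 : r 3 = -r 1 := by have := hro 1; norm_num at this; exact this
    simpa using h3
  | succ m ih =>
    intro t ht
    obtain ⟨u, rfl | rfl⟩ := Nat.even_or_odd' t
    · have hu : u < 2 ^ m := by
        have hpow2 : (2:ℕ) ^ (m + 1) = 2 * 2 ^ m := by ring
        omega
      rw [show 2 ^ (m + 1 + 1) + 2 ^ (m + 1) + 2 * u = 2 * (2 ^ (m + 1) + 2 ^ m + u) by ring,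
        hre, show 2 ^ (m + 1) + 2 * u = 2 * (2 ^ m + u) by ring, hre, ih u hu]
    · have hu : u < 2 ^ m := by
        have hpow2 : (2:ℕ) ^ (m + 1) = 2 * 2 ^ m := by ring
        omega
      rw [show 2 ^ (m + 1 + 1) + 2 ^ (m + 1) + (2 * u + 1)
            = 2 * (2 ^ (m + 1) + 2 ^ m + u) + 1 by ring, hro,
        show 2 ^ (m + 1) + (2 * u + 1) = 2 * (2 ^ m + u) + 1 by ring, hro, ih u hu]
      have hpar : ((-1:ℤ)) ^ (2 ^ (m + 1) + 2 ^ m + u) = (-1) ^ (2 ^ m + u) := by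
        rw [show 2 ^ (m + 1) + 2 ^ m + u = 2 ^ (m + 1) + (2 ^ m + u) by ring, pow_add,
          Even.neg_one_pow ⟨2 ^ m, by ring⟩, one_mul]
      rw [hpar]
      ring

noncomputable def AZ (r : ℕ → ℤ) (m : ℕ) : Matrix (Fin 2) (Fin 2) (Polynomial ℤ) :=
  ((List.range (2 ^ m)).map (step r)).prod

noncomputable def BZ (r : ℕ → ℤ) (m : ℕ) : Matrix (Fin 2) (Fin 2) (Polynomial ℤ) :=
  ((List.range (2 ^ m)).map (fun t => step r (2 ^ m + t))).prod

noncomputable def psi : Polynomial ℤ →+* Polynomial ℤ :=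
  (Polynomial.aeval (-Polynomial.X : Polynomial ℤ)).toRingHom

lemma psi_step (a b : ℤ) (h : a = -b) :
    (!![0, C a * X; 1, 1] : Matrix (Fin 2) (Fin 2) (Polynomial ℤ))
      = psi.mapMatrix !![0, C b * X; 1, 1] := by
  rw [mapM2]
  refine m2ext ?_ ?_ ?_ ?_
  · exact (map_zero _).symm
  · rw [map_mul]
    have h1 : psi (C b) = C b := by simp [psi]
    have h2 : psi X = -X := by simp [psi]
    rw [h1, h2, h, map_neg]
    ring
  · exact (map_one _).symm
  · exact (map_one _).symm

lemma AZrec (r : ℕ → ℤ) (m : ℕ) : AZ r (m + 1) = AZ r m * BZ r m := by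
  rw [AZ, AZ, BZ, show (2:ℕ) ^ (m + 1) = 2 ^ m + 2 ^ m by ring, List.range_add,
    List.map_append, List.prod_append]
  congr 2
  rw [List.map_map]
  rfl

lemma BZrec (r : ℕ → ℤ) (hr0 : r 0 = 1) (hre : ∀ n, r (2 * n) = r n)
    (hro : ∀ n, r (2 * n + 1) = (-1) ^ n * r n) (m : ℕ) :
    BZ r (m + 1) = AZ r m * psi.mapMatrix (BZ r m) := by
  rw [BZ, show (2:ℕ) ^ (m + 1) = 2 ^ m + 2 ^ m by ring, List.range_add,
    List.map_append, List.prod_append]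
  congr 1
  · rw [AZ]
    congr 1
    apply List.map_congr_left
    intro t htl
    have ht := List.mem_range.mp htl
    show step r (2 ^ m + 2 ^ m + t) = step r t
    rw [step, step, show 2 ^ m + 2 ^ m + t = 2 ^ (m + 1) + t by ring,
      rL1 r hr0 hre hro m t ht]
  · rw [BZ, map_list_prod, List.map_map, List.map_map]
    congr 1
    apply List.map_congr_left
    intro s hsl
    have hs := List.mem_range.mp hsl
    show step r (2 ^ m + 2 ^ m + (2 ^ m + s)) = psi.mapMatrix (step r (2 ^ m + s))
    rw [step, step]
    apply psi_step
    rw [show 2 ^ m + 2 ^ m + (2 ^ m + s) = 2 ^ (m + 1) + 2 ^ m + s by ring]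
    exact rL2 r hr0 hre hro m s hs

noncomputable def piZ : Polynomial ℤ →+* R4 := Polynomial.mapRingHom (Int.castRingHom (ZMod 4))

noncomputable def aM (r : ℕ → ℤ) (m : ℕ) : Matrix (Fin 2) (Fin 2) R4 :=
  piZ.mapMatrix (AZ r m)

noncomputable def bM (r : ℕ → ℤ) (m : ℕ) : Matrix (Fin 2) (Fin 2) R4 :=
  piZ.mapMatrix (BZ r m)

lemma comm_phi_psi (p : Polynomial ℤ) : piZ (psi p) = phi (piZ p) := by
  have h : piZ.comp psi = phi.comp piZ := by
    apply Polynomial.ringHom_ext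
    · intro a
      simp [psi, piZ, phi]
    · simp [psi, piZ, phi]
  exact RingHom.congr_fun h p

lemma aMrec (r : ℕ → ℤ) (m : ℕ) : aM r (m + 1) = aM r m * bM r m := by
  rw [aM, aM, bM, AZrec, map_mul]

lemma bMrec (r : ℕ → ℤ) (hr0 : r 0 = 1) (hre : ∀ n, r (2 * n) = r n)
    (hro : ∀ n, r (2 * n + 1) = (-1) ^ n * r n) (m : ℕ) :
    bM r (m + 1) = aM r m * phi.mapMatrix (bM r m) := by
  rw [bM, BZrec r hr0 hre hro, map_mul, ← aM, bM]
  congr 1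
  ext i j
  simp [RingHom.mapMatrix_apply, Matrix.map_apply, comm_phi_psi]


lemma aM0 (r : ℕ → ℤ) (hr0 : r 0 = 1) : aM r 0 = cA0 := by
  rw [aM, AZ]
  simp only [pow_zero, show List.range 1 = [0] from rfl, List.map_cons, List.map_nil, List.prod_cons,
    List.prod_nil, mul_one]
  rw [step, hr0, mapM2, cA0]
  refine m2ext ?_ ?_ ?_ ?_
  · exact map_zero _
  · rw [map_mul]; simp [piZ]
  · exact map_one _
  · exact map_one _

lemma bM0 (r : ℕ → ℤ) (hr0 : r 0 = 1)
    (hro : ∀ n, r (2 * n + 1) = (-1) ^ n * r n) : bM r 0 = cB0 := by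
  have h1 : r 1 = 1 := by have := hro 0; simpa [hr0] using this
  rw [bM, BZ]
  simp only [pow_zero, show List.range 1 = [0] from rfl, List.map_cons, List.map_nil, List.prod_cons,
    List.prod_nil, mul_one]
  rw [show (1:ℕ) + 0 = 1 from rfl, step, h1, mapM2, cB0]
  refine m2ext ?_ ?_ ?_ ?_
  · exact map_zero _
  · rw [map_mul]; simp [piZ]
  · exact map_one _
  · exact map_one _

lemma mainEven (r : ℕ → ℤ) (hr0 : r 0 = 1) (hre : ∀ n, r (2 * n) = r n)
    (hro : ∀ n, r (2 * n + 1) = (-1) ^ n * r n) :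
    ∀ k, aM r (2 * k + 4) = FAE k ∧ bM r (2 * k + 4) = FBE k := by
  intro k
  induction k with
  | zero =>
    have a0 := aM0 r hr0
    have b0 := bM0 r hr0 hro
    have a1 : aM r 1 = cA1 := by
      have h := aMrec r 0; rw [a0, b0, bA0] at h; exact h
    have b1 : bM r 1 = cB1 := by
      have h := bMrec r hr0 hre hro 0; rw [a0, b0, bP0, bB0] at h; exact h
    have a2 : aM r 2 = cA2 := by
      have h := aMrec r 1; rw [a1, b1, bA1] at h; exact h
    have b2 : bM r 2 = cB2 := by
      have h := bMrec r hr0 hre hro 1; rw [a1, b1, bP1, bB1] at h; exact h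
    have a3 : aM r 3 = cA3 := by
      have h := aMrec r 2; rw [a2, b2, bA2] at h; exact h
    have b3 : bM r 3 = cB3 := by
      have h := bMrec r hr0 hre hro 2; rw [a2, b2, bP2, bB2] at h; exact h
    have a4 : aM r 4 = cA4 := by
      have h := aMrec r 3; rw [a3, b3, bA3] at h; exact h
    have b4 : bM r 4 = cB4 := by
      have h := bMrec r hr0 hre hro 3; rw [a3, b3, bP3, bB3] at h; exact h
    constructor
    · show aM r (2 * 0 + 4) = FAE 0
      rw [show 2 * 0 + 4 = 4 by norm_num]
      exact a4.trans bFA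
    · show bM r (2 * 0 + 4) = FBE 0
      rw [show 2 * 0 + 4 = 4 by norm_num]
      exact b4.trans bFB
  | succ k ih =>
    obtain ⟨hA, hB⟩ := ih
    have hAo : aM r (2 * k + 5) = FAO k := by
      have h := aMrec r (2 * k + 4); rw [hA, hB, stepEA] at h
      rw [show 2 * k + 5 = 2 * k + 4 + 1 by ring]; exact h
    have hBo : bM r (2 * k + 5) = FBO k := by
      have h := bMrec r hr0 hre hro (2 * k + 4); rw [hA, hB, stepEB] at h
      rw [show 2 * k + 5 = 2 * k + 4 + 1 by ring]; exact h
    constructor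
    · have h := aMrec r (2 * k + 5); rw [hAo, hBo, stepOA] at h
      rw [show 2 * (k + 1) + 4 = 2 * k + 5 + 1 by ring]; exact h
    · have h := bMrec r hr0 hre hro (2 * k + 5); rw [hAo, hBo, stepOB] at h
      rw [show 2 * (k + 1) + 4 = 2 * k + 5 + 1 by ring]; exact h

lemma mainOdd (r : ℕ → ℤ) (hr0 : r 0 = 1) (hre : ∀ n, r (2 * n) = r n)
    (hro : ∀ n, r (2 * n + 1) = (-1) ^ n * r n) :
    ∀ k, aM r (2 * k + 5) = FAO k := by
  intro k
  obtain ⟨hA, hB⟩ := mainEven r hr0 hre hro k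
  have h := aMrec r (2 * k + 4); rw [hA, hB, stepEA] at h
  rw [show 2 * k + 5 = 2 * k + 4 + 1 by ring]; exact h

lemma piX : piZ X = X := by simp [piZ]

lemma piS (n : ℕ) : piZ (Spoly n) = sR n := by
  rw [Spoly, sR, map_sum]
  apply Finset.sum_congr rfl
  intro i _
  rw [map_pow, piX]

lemma piSe (n : ℕ) : piZ (Sepoly n) = seR n := by
  rw [Sepoly, seR, map_sum]
  apply Finset.sum_congr rfl
  intro i _
  rw [map_pow, piX]

lemma piSo (n : ℕ) : piZ (Sopoly n) = soR n := by
  rw [Sopoly, soR, map_sum]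
  apply Finset.sum_congr rfl
  intro i _
  rw [map_pow, piX]

lemma piT (n : ℕ) : piZ (Tpoly n) = tR n := by
  rw [Tpoly, tR, map_sum]
  apply Finset.sum_congr rfl
  intro i _
  rw [map_sum]
  apply Finset.sum_congr rfl
  intro l _
  rw [map_pow, piX]

lemma coeff_cong (p q : Polynomial ℤ) (h : piZ p = piZ q) (i : ℕ) :
    p.coeff i ≡ q.coeff i [ZMOD 4] := by
  have h2 := congrArg (fun f => Polynomial.coeff f i) h
  simp only [piZ, Polynomial.coe_mapRingHom, Polynomial.coeff_map] at h2
  have h3 : ((p.coeff i : ℤ) : ZMod 4) = ((q.coeff i : ℤ) : ZMod 4) := by exact_mod_cast h2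
  have h4 := (ZMod.intCast_eq_intCast_iff _ _ 4).mp h3
  exact_mod_cast h4

lemma m2_e10 {α : Type*} (a b c d : α) : (!![a, b; c, d]) 1 0 = c := by simp

lemma m2_e11 {α : Type*} (a b c d : α) : (!![a, b; c, d]) 1 1 = d := by simp


lemma Qentries (r : ℕ → ℤ) (P Q : ℕ → Polynomial ℤ)
    (hPQ : ∀ n : ℕ, 1 ≤ n →
      !![P (n - 1), P n; Q (n - 1), Q n] = ((List.range (n + 1)).map (step r)).prod)
    (m : ℕ) (hm : 1 ≤ m) :
    piZ (Q (2 ^ m - 2)) = aM r m 1 0 ∧ piZ (Q (2 ^ m - 1)) = aM r m 1 1 := by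
  have h2 : (2:ℕ) ≤ 2 ^ m := by
    calc (2:ℕ) = 2 ^ 1 := by norm_num
    _ ≤ 2 ^ m := Nat.pow_le_pow_right (by norm_num) hm
  have hPQ1 := hPQ (2 ^ m - 1) (by omega)
  rw [show 2 ^ m - 1 + 1 = 2 ^ m by omega] at hPQ1
  constructor
  · have h := congrArg (fun M => piZ (M 1 0)) hPQ1
    simp only [m2_e10] at h
    rw [show 2 ^ m - 1 - 1 = 2 ^ m - 2 by omega] at h
    rw [h, aM, AZ]
    simp [RingHom.mapMatrix_apply, Matrix.map_apply]
  · have h := congrArg (fun M => piZ (M 1 1)) hPQ1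
    simp only [m2_e11] at h
    rw [h, aM, AZ]
    simp [RingHom.mapMatrix_apply, Matrix.map_apply]

/-- (Lemma 5.3 (1)–(4).) Mod-4 description of the denominators of the convergents of the
Rudin–Shapiro Stieltjes continued fraction. -/
theorem stmt13 (r : ℕ → ℤ) (hr0 : r 0 = 1)
    (hre : ∀ n, r (2 * n) = r n) (hro : ∀ n, r (2 * n + 1) = (-1) ^ n * r n)
    (P Q : ℕ → Polynomial ℤ)
    (hP0 : P 0 = Polynomial.C (r 0) * Polynomial.X) (hQ0 : Q 0 = 1)
    (hPQ : ∀ n : ℕ, 1 ≤ n →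
      !![P (n - 1), P n; Q (n - 1), Q n] = ((List.range (n + 1)).map (step r)).prod) :
    ∀ j : ℕ, 2 ≤ j →
      (∀ i : ℕ, (Q (2 ^ (2 * j) - 2)).coeff i ≡
        (1 + 2 * X + 2 * (1 + X) * Spoly (2 * j - 2) :
          Polynomial ℤ).coeff i [ZMOD 4]) ∧
      (∀ i : ℕ, (Q (2 ^ (2 * j + 1) - 2)).coeff i ≡
        (1 + 2 * (1 + X) * Spoly (2 * j - 1) : Polynomial ℤ).coeff i [ZMOD 4]) ∧
      (∀ i : ℕ, (Q (2 ^ (2 * j) - 1)).coeff i ≡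
        (1 + 2 * X ^ 2 + 2 * X ^ 5 + 2 * X * Sopoly (j - 2) +
          (3 + 2 * X ^ 3) * Spoly (2 * j - 2) + 2 * (1 + X) * Tpoly (2 * j - 2) +
          X ^ (2 ^ (2 * j - 1)) : Polynomial ℤ).coeff i [ZMOD 4]) ∧
      (∀ i : ℕ, (Q (2 ^ (2 * j + 1) - 1)).coeff i ≡
        (1 + 2 * X ^ 2 + 2 * X ^ 5 + 2 * X * Sepoly (j - 1) +
          (3 + 2 * X ^ 3) * Spoly (2 * j - 1) + 2 * (1 + X) * Tpoly (2 * j - 1) +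
          X ^ (2 ^ (2 * j)) : Polynomial ℤ).coeff i [ZMOD 4]) := by
  intro j hj
  obtain ⟨k, rfl⟩ : ∃ k, j = k + 2 := ⟨j - 2, by omega⟩
  have hAE := (mainEven r hr0 hre hro k).1
  have hAO := mainOdd r hr0 hre hro k
  have hQE := Qentries r P Q hPQ (2 * (k + 2)) (by omega)
  have hQO := Qentries r P Q hPQ (2 * (k + 2) + 1) (by omega)
  rw [show 2 * (k + 2) = 2 * k + 4 by ring] at hQE
  rw [show 2 * (k + 2) + 1 = 2 * k + 5 by ring] at hQO
  refine ⟨fun i => coeff_cong _ _ ?_ i, fun i => coeff_cong _ _ ?_ i,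
    fun i => coeff_cong _ _ ?_ i, fun i => coeff_cong _ _ ?_ i⟩
  · rw [show 2 * (k + 2) - 2 = 2 * k + 2 by omega, show 2 * (k + 2) = 2 * k + 4 by ring,
      hQE.1, hAE]
    simp only [map_add, map_mul, map_pow, map_one, map_ofNat, piX, piS]
    simp only [FAE, m2_e10]
    ring
  · rw [show 2 * (k + 2) - 1 = 2 * k + 3 by omega, show 2 * (k + 2) + 1 = 2 * k + 5 by ring,
      hQO.1, hAO]
    simp only [map_add, map_mul, map_pow, map_one, map_ofNat, piX, piS]
    simp only [FAO, m2_e10]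
    ring
  · rw [show k + 2 - 2 = k by omega, show 2 * (k + 2) - 2 = 2 * k + 2 by omega,
      show 2 * (k + 2) - 1 = 2 * k + 3 by omega, show 2 * (k + 2) = 2 * k + 4 by ring,
      hQE.2, hAE]
    simp only [map_add, map_mul, map_pow, map_one, map_ofNat, piX, piS, piSo]
    simp only [map_add, map_mul, map_one, map_ofNat, piT]
    simp only [FAE, m2_e11]
    ring
  · rw [show k + 2 - 1 = k + 1 by omega, show 2 * (k + 2) - 1 = 2 * k + 3 by omega,
      show 2 * (k + 2) + 1 = 2 * k + 5 by ring, show 2 * (k + 2) = 2 * k + 4 by ring,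
      hQO.2, hAO]
    simp only [map_add, map_mul, map_pow, map_one, map_ofNat, piX, piS, piSe]
    simp only [map_add, map_mul, map_one, map_ofNat, piT]
    simp only [FAO, m2_e11]
    ring
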